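/- Let L be a GKSL generator with operators H, (L_ℓ) and suppose x ∈ B(H) commutes with every iterated commutator δ_H^n(L_ℓ) and δ_H^n(L_ℓ*), n ≥ 0, ℓ ≥ 1 (where δ_H^0(X) = X, δ_H^{n+1}(X) = [H, δ_H^n(X)]). Then L^n(x) = i^n δ_H^n(x) for all n ≥ 0, and hence e^{tL}(x) = e^{itH} x e^{−itH} for all t ≥ 0. -/

import Mathlib

/-- Iterated commutators `δ_H^n(x)`: `δ_H^0(x) = x`, `δ_H^{n+1}(x) = [H, δ_H^n(x)]`. -/
def iterComm {A : Type} [Ring A] (h x : A) : ℕ → A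
  | 0 => x
  | n + 1 => h * iterComm h x n - iterComm h x n * h

/-- Jacobi-style induction: if `x` commutes with all `δ_h^m(l)` then so does every
`δ_h^n(x)`. -/
lemma iterComm_commute {A : Type} [Ring A] (h l x : A)
    (hx : ∀ m, x * iterComm h l m = iterComm h l m * x) :
    ∀ n m, iterComm h x n * iterComm h l m = iterComm h l m * iterComm h x n := by
  intro n
  induction n with
  | zero => intro m; simpa [iterComm] using hx m
  | succ n ih =>
    intro m
    have h1 := ih m
    have h2 := ih (m + 1)
    simp only [iterComm] at h2 ⊢
    set a := iterComm h x n
    set b := iterComm h l m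
    have key : (h * a - a * h) * b - b * (h * a - a * h) =
        (h * (a * b - b * a) - (a * b - b * a) * h) -
          (a * (h * b - b * h) - (h * b - b * h) * a) := by noncomm_ring
    have hz : (h * a - a * h) * b - b * (h * a - a * h) = 0 := by
      rw [key, h1, h2]; simp
    exact sub_eq_zero.mp hz

set_option maxHeartbeats 1000000 in
set_option synthInstance.maxHeartbeats 200000 in
theorem commutes_with_iterated_commutators_implies_unitary_evolution
    {Hs : Type} [NormedAddCommGroup Hs] [InnerProductSpace ℂ Hs] [CompleteSpace Hs]
    (N : ℕ) (H : Hs →L[ℂ] Hs) (hH : IsSelfAdjoint H)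
    (L : Fin N → (Hs →L[ℂ] Hs))
    (𝓛 : (Hs →L[ℂ] Hs) →L[ℂ] (Hs →L[ℂ] Hs))
    (h𝓛 : ∀ y, 𝓛 y = Complex.I • (H * y - y * H) -
      (1/2 : ℂ) • ∑ ℓ, (star (L ℓ) * L ℓ * y - 2 * (star (L ℓ) * y * L ℓ) +
        y * (star (L ℓ) * L ℓ)))
    (x : Hs →L[ℂ] Hs)
    (hcomm : ∀ (n : ℕ) (ℓ : Fin N),
      Commute x (iterComm H (L ℓ) n) ∧ Commute x (iterComm H (star (L ℓ)) n)) :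
    (∀ n : ℕ, (𝓛 ^ n) x = Complex.I ^ n • iterComm H x n) ∧
    (∀ t : ℝ, 0 ≤ t →
      NormedSpace.exp (t • 𝓛) x =
        NormedSpace.exp ((Complex.I * t) • H) * x *
          NormedSpace.exp ((-(Complex.I * t)) • H)) := by
  have hcomm1 : ∀ (n : ℕ) (ℓ : Fin N),
      iterComm H x n * L ℓ = L ℓ * iterComm H x n := fun n ℓ =>
    iterComm_commute H (L ℓ) x (fun m => (hcomm m ℓ).1.eq) n 0
  have hcomm2 : ∀ (n : ℕ) (ℓ : Fin N),
      iterComm H x n * star (L ℓ) = star (L ℓ) * iterComm H x n := fun n ℓ =>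
    iterComm_commute H (star (L ℓ)) x (fun m => (hcomm m ℓ).2.eq) n 0
  -- the dissipator vanishes on each iterated commutator of `x`
  have hdiss : ∀ (n : ℕ) (ℓ : Fin N),
      star (L ℓ) * L ℓ * iterComm H x n - 2 * (star (L ℓ) * iterComm H x n * L ℓ) +
        iterComm H x n * (star (L ℓ) * L ℓ) = 0 := by
    intro n ℓ
    set a := iterComm H x n
    have e1 : star (L ℓ) * L ℓ * a = star (L ℓ) * a * L ℓ := by
      rw [mul_assoc, ← hcomm1 n ℓ, ← mul_assoc]
    have e2 : a * (star (L ℓ) * L ℓ) = star (L ℓ) * a * L ℓ := by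
      rw [← mul_assoc, hcomm2 n ℓ]
    rw [e1, e2, two_mul]
    abel
  -- 𝓛 acts as i[H, ·] on the iterated commutators of x
  have hstep : ∀ n : ℕ, 𝓛 (iterComm H x n) = Complex.I • iterComm H x (n + 1) := by
    intro n
    rw [h𝓛]
    have hz : (∑ ℓ, (star (L ℓ) * L ℓ * iterComm H x n -
        2 * (star (L ℓ) * iterComm H x n * L ℓ) +
        iterComm H x n * (star (L ℓ) * L ℓ))) = 0 :=
      Finset.sum_eq_zero fun ℓ _ => hdiss n ℓ
    rw [hz]
    simp [iterComm]
  -- Part 1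
  have part1 : ∀ n : ℕ, (𝓛 ^ n) x = Complex.I ^ n • iterComm H x n := by
    intro n
    induction n with
    | zero => simp [iterComm]
    | succ n ih =>
      rw [pow_succ' 𝓛 n]
      have h' : (𝓛 * 𝓛 ^ n) x = 𝓛 ((𝓛 ^ n) x) := rfl
      rw [h', ih, map_smul, hstep n, smul_smul, ← pow_succ]
  refine ⟨part1, ?_⟩
  -- Part 2
  intro t _
  set mL : (Hs →L[ℂ] Hs) → ((Hs →L[ℂ] Hs) →L[ℂ] (Hs →L[ℂ] Hs)) :=
      fun a => ContinuousLinearMap.mul ℂ (Hs →L[ℂ] Hs) a with hmLdef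
  set mR : (Hs →L[ℂ] Hs) → ((Hs →L[ℂ] Hs) →L[ℂ] (Hs →L[ℂ] Hs)) :=
      fun a => (ContinuousLinearMap.mul ℂ (Hs →L[ℂ] Hs)).flip a with hmRdef
  have hmL : ∀ a y : Hs →L[ℂ] Hs, mL a y = a * y := fun a y => rfl
  have hmR : ∀ a y : Hs →L[ℂ] Hs, mR a y = y * a := fun a y => rfl
  set M : (Hs →L[ℂ] Hs) →L[ℂ] (Hs →L[ℂ] Hs) :=
      Complex.I • (mL H - mR H) with hM
  have hMapp : ∀ y, M y = Complex.I • (H * y - y * H) := by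
    intro y; simp [hM, hmL, hmR]
  have hMn : ∀ n : ℕ, (M ^ n) x = Complex.I ^ n • iterComm H x n := by
    intro n
    induction n with
    | zero => simp [iterComm]
    | succ n ih =>
      rw [pow_succ' M n]
      have h' : (M * M ^ n) x = M ((M ^ n) x) := rfl
      rw [h', ih, map_smul, hMapp, smul_smul, ← pow_succ]
      rfl
  -- applying exp of an operator-on-operators to x via the series
  have happ : ∀ (T : (Hs →L[ℂ] Hs) →L[ℂ] (Hs →L[ℂ] Hs)) (z : Hs →L[ℂ] Hs),
      NormedSpace.exp T z = ∑' (n : ℕ), (((n : ℕ).factorial : ℂ)⁻¹) • (T ^ n) z := by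
    intro T z
    rw [NormedSpace.exp_eq_tsum (𝕂 := ℂ)]
    have hs : Summable fun n : ℕ => (((n : ℕ).factorial : ℂ)⁻¹) • T ^ n :=
      NormedSpace.expSeries_summable' (𝕂 := ℂ) T
    have := (ContinuousLinearMap.apply ℂ (Hs →L[ℂ] Hs) z).map_tsum hs
    simpa using this
  have hsp : ∀ (T : (Hs →L[ℂ] Hs) →L[ℂ] (Hs →L[ℂ] Hs)) (n : ℕ),
      ((t • T) ^ n) x = t ^ n • ((T ^ n) x) := by
    intro T n
    induction n with
    | zero => simp
    | succ n ih =>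
      rw [pow_succ' (t • T) n]
      have h' : ((t • T) * (t • T) ^ n) x = (t • T) (((t • T) ^ n) x) := rfl
      rw [h', ih, ContinuousLinearMap.smul_apply, ContinuousLinearMap.map_smul_of_tower,
        smul_smul, ← pow_succ']
      have h'' : (T * T ^ n) x = T ((T ^ n) x) := rfl
      rw [pow_succ' T n, h'']
  have hLM : NormedSpace.exp (t • 𝓛) x = NormedSpace.exp (t • M) x := by
    rw [happ, happ]
    refine tsum_congr fun n => ?_
    rw [hsp 𝓛 n, hsp M n, part1 n, hMn n]
  rw [hLM]
  -- split t • M into commuting left and right multiplications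
  set u : Hs →L[ℂ] Hs := (Complex.I * (t : ℂ)) • H with hu
  set v : Hs →L[ℂ] Hs := (-(Complex.I * (t : ℂ))) • H with hv
  have hsplit : t • M = mL u + mR v := by
    refine ContinuousLinearMap.ext fun y => ?_
    rw [ContinuousLinearMap.smul_apply, hMapp, ContinuousLinearMap.add_apply, hmL, hmR,
      hu, hv, smul_mul_assoc, mul_smul_comm]
    match_scalars
    all_goals simp only [Complex.coe_algebraMap]
    all_goals ring
  have hc : Commute (mL u) (mR v) := by
    refine ContinuousLinearMap.ext fun y => ?_
    show mL u (mR v y) = mR v (mL u y)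
    rw [hmL, hmR, hmR, hmL, mul_assoc]
  have hmulLeft_pow : ∀ (a : Hs →L[ℂ] Hs) (n : ℕ),
      (mL a) ^ n = mL (a ^ n) := by
    intro a n
    induction n with
    | zero =>
      refine ContinuousLinearMap.ext fun y => ?_
      rw [pow_zero, pow_zero, hmL, one_mul, ContinuousLinearMap.one_apply]
    | succ n ih =>
      rw [pow_succ, pow_succ, ih]
      refine ContinuousLinearMap.ext fun y => ?_
      show mL (a ^ n) (mL a y) = mL (a ^ n * a) y
      rw [hmL, hmL, hmL, mul_assoc]
  have hmulRight_pow : ∀ (a : Hs →L[ℂ] Hs) (n : ℕ),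
      (mR a) ^ n = mR (a ^ n) := by
    intro a n
    induction n with
    | zero =>
      refine ContinuousLinearMap.ext fun y => ?_
      rw [pow_zero, pow_zero, hmR, mul_one, ContinuousLinearMap.one_apply]
    | succ n ih =>
      rw [pow_succ, pow_succ', ih]
      refine ContinuousLinearMap.ext fun y => ?_
      show mR (a ^ n) (mR a y) = mR (a * a ^ n) y
      rw [hmR, hmR, hmR, mul_assoc]
  have hexpL : ∀ (a y : Hs →L[ℂ] Hs),
      NormedSpace.exp (mL a) y = NormedSpace.exp a * y := by
    intro a y
    rw [happ]
    simp_rw [hmulLeft_pow, hmL]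
    rw [NormedSpace.exp_eq_tsum (𝕂 := ℂ)]
    have hs : Summable fun n : ℕ => (((n : ℕ).factorial : ℂ)⁻¹) • a ^ n :=
      NormedSpace.expSeries_summable' (𝕂 := ℂ) a
    have := (mR y).map_tsum hs
    simpa [smul_mul_assoc, hmR] using this.symm
  have hexpR : ∀ (a y : Hs →L[ℂ] Hs),
      NormedSpace.exp (mR a) y = y * NormedSpace.exp a := by
    intro a y
    rw [happ]
    simp_rw [hmulRight_pow, hmR]
    rw [NormedSpace.exp_eq_tsum (𝕂 := ℂ)]
    have hs : Summable fun n : ℕ => (((n : ℕ).factorial : ℂ)⁻¹) • a ^ n :=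
      NormedSpace.expSeries_summable' (𝕂 := ℂ) a
    have := (mL y).map_tsum hs
    simpa [mul_smul_comm, hmL] using this.symm
  rw [hsplit, NormedSpace.exp_add_of_commute_of_mem_ball (𝕂 := ℂ) hc
    ((NormedSpace.expSeries_radius_eq_top ℂ ((Hs →L[ℂ] Hs) →L[ℂ] (Hs →L[ℂ] Hs))).symm ▸ edist_lt_top _ _)
    ((NormedSpace.expSeries_radius_eq_top ℂ ((Hs →L[ℂ] Hs) →L[ℂ] (Hs →L[ℂ] Hs))).symm ▸ edist_lt_top _ _)]
  have h'' : (NormedSpace.exp (mL u) *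
      NormedSpace.exp (mR v)) x =
      NormedSpace.exp (mL u)
        (NormedSpace.exp (mR v) x) := rfl
  rw [h'', hexpR, hexpL, hu, hv, mul_assoc]
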